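/- (Equivalence Theorem) Let (d_n)_{n≥1} be positive reals with partial sums S_n = ∑_{i=1}^n d_i satisfying S_n → ∞ and S_{n−1}/S_n → 1 as n → ∞. Then for every continuous function f : [0,1] → ℝ, (1/S_n) · ∑_{r=1}^n d_r f(S_r/S_n) → ∫_0^1 f(x) dx as n → ∞. -/

import Mathlib

open Filter Finset

/-- Equivalence Theorem: If `d` is positive with partial sums `S n → ∞`
and `S (n-1) / S n → 1`, then for every continuous `f` on `[0,1]`,
`(1 / S n) * ∑_{r=1}^n d r * f (S r / S n) → ∫_0^1 f`. -/
theorem equivalence_theorem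
    (d : ℕ → ℝ) (hd : ∀ n, 1 ≤ n → 0 < d n)
    (S : ℕ → ℝ) (hS : ∀ n, S n = ∑ i ∈ Finset.Icc 1 n, d i)
    (hSdiv : Tendsto S atTop atTop)
    (hSratio : Tendsto (fun n : ℕ => S (n - 1) / S n) atTop (nhds 1))
    (f : ℝ → ℝ) (hf : ContinuousOn f (Set.Icc 0 1)) :
    Tendsto (fun n : ℕ =>
        (1 / S n) * ∑ r ∈ Finset.Icc 1 n, d r * f (S r / S n))
      atTop (nhds (∫ x in (0:ℝ)..1, f x)) := by
  have hS0 : S 0 = 0 := by simp [hS]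
  have hmono : Monotone S := by
    apply monotone_nat_of_le_succ
    intro n
    have h1 : S (n+1) = S n + d (n+1) := by
      rw [hS, hS, Finset.sum_Icc_succ_top (by omega : 1 ≤ n+1)]
    rw [h1]
    linarith [hd (n+1) (by omega)]
  have hSpos : ∀ n, 1 ≤ n → 0 < S n := by
    intro n hn
    calc (0:ℝ) < d 1 := hd 1 le_rfl
    _ = S 1 := by simp [hS]
    _ ≤ S n := hmono hn
  have hSnonneg : ∀ n, 0 ≤ S n := by
    intro n
    calc (0:ℝ) = S 0 := hS0.symm
    _ ≤ S n := hmono (Nat.zero_le n)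
  have hdiff : ∀ n, 1 ≤ n → S n - S (n-1) = d n := by
    intro n hn
    have h1 : S n = S (n-1) + d n := by
      rw [hS, hS]
      have h2 : Finset.Icc 1 n = insert n (Finset.Icc 1 (n-1)) := by
        ext x; simp only [Finset.mem_Icc, Finset.mem_insert]; omega
      rw [h2, Finset.sum_insert (by simp only [Finset.mem_Icc]; omega)]
      ring
    linarith
  -- d n / S n → 0
  have hdr : Tendsto (fun n : ℕ => d n / S n) atTop (nhds 0) := by
    have h1 : Tendsto (fun n : ℕ => 1 - S (n-1) / S n) atTop (nhds 0) := by
      have h2 := hSratio.const_sub 1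
      simpa using h2
    apply h1.congr'
    filter_upwards [eventually_ge_atTop 1] with n hn
    have hp := hSpos n hn
    have hD := hdiff n hn
    field_simp
    linarith
  -- mesh → 0
  have mesh : ∀ ε : ℝ, 0 < ε → ∃ N, ∀ n ≥ N, ∀ r, 1 ≤ r → r ≤ n → d r / S n ≤ ε := by
    intro ε hε
    obtain ⟨m₀, hm₀⟩ := (Metric.tendsto_atTop.1 hdr) ε hε
    set m := max m₀ 1 with hm
    have hmr : ∀ r ≥ m, d r / S r ≤ ε := by
      intro r hr
      have := hm₀ r (le_trans (le_max_left _ _) hr)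
      rw [Real.dist_eq, sub_zero] at this
      exact le_of_lt (lt_of_abs_lt this)
    obtain ⟨N₁, hN₁⟩ := Filter.eventually_atTop.1 (hSdiv.eventually_ge_atTop (S m / ε))
    refine ⟨max N₁ m, fun n hn r hr1 hrn => ?_⟩
    have hnN₁ : N₁ ≤ n := le_trans (le_max_left _ _) hn
    have hnm : m ≤ n := le_trans (le_max_right _ _) hn
    have h1n : 1 ≤ n := le_trans (le_max_right m₀ 1) hnm
    have hSn := hSpos n h1n
    rcases le_or_gt m r with h | h
    · have hSr := hSpos r hr1
      calc d r / S n ≤ d r / S r :=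
            div_le_div_of_nonneg_left (le_of_lt (hd r hr1)) hSr (hmono hrn)
      _ ≤ ε := hmr r h
    · have hdm : d r ≤ S m := by
        rw [hS]
        exact Finset.single_le_sum (fun i hi => le_of_lt (hd i (Finset.mem_Icc.1 hi).1))
          (Finset.mem_Icc.2 ⟨hr1, le_of_lt h⟩)
      have hSm : S m / ε ≤ S n := hN₁ n hnN₁
      have hSm2 : S m ≤ S n * ε := (div_le_iff₀ hε).1 hSm
      calc d r / S n ≤ S m / S n := (div_le_div_iff_of_pos_right hSn).2 hdm
      _ ≤ ε := by rw [div_le_iff₀ hSn]; linarith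
  -- main argument
  rw [Metric.tendsto_atTop]
  intro ε hε
  obtain ⟨δ, hδ, hucδ⟩ := Metric.uniformContinuousOn_iff.1
    (isCompact_Icc.uniformContinuousOn_of_continuous hf) (ε/2) (by linarith)
  obtain ⟨N₀, hN₀⟩ := mesh (δ/2) (by linarith)
  refine ⟨max N₀ 1, fun n hn => ?_⟩
  have hn1 : 1 ≤ n := le_trans (le_max_right _ _) hn
  have hnN₀ : N₀ ≤ n := le_trans (le_max_left _ _) hn
  have hSn := hSpos n hn1
  set a : ℕ → ℝ := fun i => S i / S n with ha
  have ha0 : a 0 = 0 := by simp [ha, hS0]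
  have han : a n = 1 := by simp only [ha]; field_simp
  have hamono : Monotone a := fun i j hij => (div_le_div_iff_of_pos_right hSn).2 (hmono hij)
  have harange : ∀ i, i ≤ n → a i ∈ Set.Icc (0:ℝ) 1 := by
    intro i hi
    constructor
    · exact div_nonneg (hSnonneg i) (le_of_lt hSn)
    · rw [← han]; exact hamono hi
  have hsub : ∀ i, i < n → Set.uIcc (a i) (a (i+1)) ⊆ Set.Icc 0 1 := by
    intro i hi
    rw [Set.uIcc_of_le (hamono (Nat.le_succ i))]
    exact Set.Icc_subset_Icc (harange i (le_of_lt hi)).1 (harange (i+1) hi).2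
  have hint : ∀ i < n, IntervalIntegrable f MeasureTheory.volume (a i) (a (i+1)) := by
    intro i hi
    exact (hf.mono (hsub i hi)).intervalIntegrable
  have hteles : ∑ i ∈ Finset.range n, ∫ x in (a i)..(a (i+1)), f x = ∫ x in (0:ℝ)..1, f x := by
    rw [intervalIntegral.sum_integral_adjacent_intervals hint, ha0, han]
  have hstep : ∀ i < n, a (i+1) - a i = d (i+1) / S n := by
    intro i _
    have := hdiff (i+1) (by omega)
    simp only [Nat.add_sub_cancel] at this
    rw [ha]
    field_simp
    linarith
  -- rewrite the sum
  have hsum : (1 / S n) * ∑ r ∈ Finset.Icc 1 n, d r * f (S r / S n)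
      = ∑ i ∈ Finset.range n, (a (i+1) - a i) * f (a (i+1)) := by
    rw [← Finset.Ico_add_one_right_eq_Icc, Finset.sum_Ico_eq_sum_range, Finset.mul_sum]
    simp only [Nat.add_sub_cancel, Nat.succ_sub_one]
    refine Finset.sum_congr rfl fun i hi => ?_
    rw [hstep i (Finset.mem_range.1 hi)]
    have h1 : (1:ℕ) + i = i + 1 := by omega
    rw [h1, ha]
    ring
  rw [hsum, Real.dist_eq, ← hteles, ← Finset.sum_sub_distrib]
  have hbound : ∀ i ∈ Finset.range n,
      |(a (i+1) - a i) * f (a (i+1)) - ∫ x in (a i)..(a (i+1)), f x|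
        ≤ (ε/2) * (a (i+1) - a i) := by
    intro i hi
    have hi' := Finset.mem_range.1 hi
    have hle : a i ≤ a (i+1) := hamono (Nat.le_succ i)
    have hconst : (a (i+1) - a i) * f (a (i+1))
        = ∫ x in (a i)..(a (i+1)), f (a (i+1)) := by
      rw [intervalIntegral.integral_const]; simp [smul_eq_mul]
    rw [hconst, ← intervalIntegral.integral_sub (by simp : IntervalIntegrable
        (fun _ => f (a (i+1))) MeasureTheory.volume (a i) (a (i+1))) (hint i hi')]
    have hnorm : ∀ x ∈ Set.uIoc (a i) (a (i+1)), ‖f (a (i+1)) - f x‖ ≤ ε/2 := by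
      intro x hx
      rw [Set.uIoc_of_le hle] at hx
      have hxmem : x ∈ Set.Icc (0:ℝ) 1 := by
        constructor
        · linarith [(harange i (le_of_lt hi')).1, hx.1]
        · linarith [(harange (i+1) hi').2, hx.2]
      have hamem := harange (i+1) hi'
      have hdist : dist (a (i+1)) x < δ := by
        rw [Real.dist_eq, abs_of_nonneg (by linarith [hx.2])]
        have := hN₀ n hnN₀ (i+1) (by omega) hi'
        rw [← hstep i hi'] at this
        have hxlo := hx.1
        linarith
      exact le_of_lt (hucδ _ hamem _ hxmem hdist)
    calc |∫ x in (a i)..(a (i+1)), (f (a (i+1)) - f x)|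
        ≤ (ε/2) * |a (i+1) - a i| :=
          intervalIntegral.norm_integral_le_of_norm_le_const hnorm
      _ = (ε/2) * (a (i+1) - a i) := by rw [abs_of_nonneg (by linarith)]
  calc |∑ i ∈ Finset.range n, ((a (i+1) - a i) * f (a (i+1)) - ∫ x in (a i)..(a (i+1)), f x)|
      ≤ ∑ i ∈ Finset.range n, |(a (i+1) - a i) * f (a (i+1)) - ∫ x in (a i)..(a (i+1)), f x| :=
        Finset.abs_sum_le_sum_abs _ _
    _ ≤ ∑ i ∈ Finset.range n, (ε/2) * (a (i+1) - a i) := Finset.sum_le_sum hbound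
    _ = (ε/2) * (a n - a 0) := by rw [← Finset.mul_sum, Finset.sum_range_sub]
    _ < ε := by rw [han, ha0]; linarith
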